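/- arXiv:1201.3270 — 3 statements merged into one kernel-verified Lean document; each statement's English description precedes it below -/
import Mathlib

section
/- Let γ₁ > 2 and γ₂ ∈ (0,1), and set φ(s) := (1+s)^{−γ₁−2γ₂} and β(s) := (1+s)^{−γ₁−γ₂} for s ≥ 0, with ψ(s) := s·β(s). Then: (i) β²(s)/φ(s) = (1+s)^{−γ₁} ≤ (1+s)^{−γ₁} for all s ≥ 0, so condition (balance) holds with D₁ = 1; (ii) φ(s) ≥ C₁(1+s)^{l₁} and β(s) ≤ C₂(1+s)^{l₂} hold with suitable C₁, C₂ > 0 and l₁ = −γ₁−2γ₂, l₂ = −γ₁−γ₂; (iii) there exist s₀ > 1, a > 0, μ ∈ (0,1) and b > 0 such that G(s) ≤ a·s·(ln s)^μ for all s ≥ s₀ and H(s) ≤ b·s/ln s for all s ≥ s₀, where G(s) := ∫_{s₀}^s ∫_{s₀}^σ φ(τ)/ψ(τ) dτ dσ and H(s) := ∫_0^s σφ(σ)/ψ(σ) dσ. -/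
open MeasureTheory Real Set

noncomputable section

/-- `G(s) := ∫_{s₀}^s ∫_{s₀}^σ φ(τ)/ψ(τ) dτ dσ`. -/
def Gfun (φ ψ : ℝ → ℝ) (s₀ : ℝ) (s : ℝ) : ℝ :=
  ∫ σ in s₀..s, ∫ τ in s₀..σ, φ τ / ψ τ

/-- `H(s) := ∫_0^s σ φ(σ)/ψ(σ) dσ`. -/
def Hfun (φ ψ : ℝ → ℝ) (s : ℝ) : ℝ := ∫ σ in (0:ℝ)..s, σ * φ σ / ψ σ

/-- The example diffusion coefficient `φ(s) = (1+s)^{−γ₁−2γ₂}`. -/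
def φex (γ₁ γ₂ : ℝ) : ℝ → ℝ := fun s => (1 + s) ^ (-(γ₁ + 2 * γ₂))

/-- The example sensitivity coefficient `β(s) = (1+s)^{−γ₁−γ₂}`. -/
def βex (γ₁ γ₂ : ℝ) : ℝ → ℝ := fun s => (1 + s) ^ (-(γ₁ + γ₂))

/-- `ψ(s) = s β(s)`. -/
def ψex (γ₁ γ₂ : ℝ) : ℝ → ℝ := fun s => s * βex γ₁ γ₂ s

/-- The ratio `φ/ψ` simplifies to `(1+τ)^{-γ₂}/τ` for `τ ≠ 0`, `1 + τ > 0`. -/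
lemma ratio_eq (γ₁ γ₂ τ : ℝ) (hτ : τ ≠ 0) (h1τ : 0 < 1 + τ) :
    φex γ₁ γ₂ τ / ψex γ₁ γ₂ τ = (1 + τ) ^ (-γ₂) / τ := by
  have hβ : βex γ₁ γ₂ τ ≠ 0 := by
    simp only [βex]; positivity
  have hφ : φex γ₁ γ₂ τ = (1 + τ) ^ (-γ₂) * βex γ₁ γ₂ τ := by
    simp only [φex, βex, ← Real.rpow_add h1τ]; ring_nf
  rw [hφ, ψex]
  field_simp

lemma lt_log_three : (1:ℝ) < Real.log 3 := by
  rw [Real.lt_log_iff_exp_lt (by norm_num)]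
  calc Real.exp 1 < 2.7182818286 := Real.exp_one_lt_d9
    _ < 3 := by norm_num

/-- Remark 1.5 of the paper: for `γ₁ > 2`, `γ₂ ∈ (0,1)` and
`φ(s) = (1+s)^{−γ₁−2γ₂}`, `β(s) = (1+s)^{−γ₁−γ₂}`, conditions (balance), (phibeta),
(G1) and (H1) all hold. -/
theorem example_satisfies_balance_phibeta_G1_H1
    (γ₁ γ₂ : ℝ) (hγ₁ : 2 < γ₁) (hγ₂ : γ₂ ∈ Ioo (0:ℝ) 1) :
    (∀ s ≥ (0:ℝ),
        (βex γ₁ γ₂ s) ^ 2 / φex γ₁ γ₂ s = (1 + s) ^ (-γ₁) ∧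
        (βex γ₁ γ₂ s) ^ 2 / φex γ₁ γ₂ s ≤ 1 * (1 + s) ^ (-γ₁)) ∧
    (∃ C₁ > (0:ℝ), ∃ C₂ > (0:ℝ), ∀ s ≥ (0:ℝ),
        C₁ * (1 + s) ^ (-(γ₁ + 2 * γ₂)) ≤ φex γ₁ γ₂ s ∧
        βex γ₁ γ₂ s ≤ C₂ * (1 + s) ^ (-(γ₁ + γ₂))) ∧
    (∃ s₀ > (1:ℝ), ∃ a > (0:ℝ), ∃ μ ∈ Ioo (0:ℝ) 1, ∃ b > (0:ℝ),
        (∀ s ≥ s₀, Gfun (φex γ₁ γ₂) (ψex γ₁ γ₂) s₀ s ≤ a * s * Real.log s ^ μ) ∧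
        (∀ s ≥ s₀, Hfun (φex γ₁ γ₂) (ψex γ₁ γ₂) s ≤ b * s / Real.log s)) := by
  obtain ⟨hγ₂0, hγ₂1⟩ := hγ₂
  have h1γ₂ : (0:ℝ) < 1 - γ₂ := by linarith
  constructor
  · -- (balance)
    intro s hs
    have h1s : (0:ℝ) < 1 + s := by linarith
    have key : (βex γ₁ γ₂ s) ^ 2 / φex γ₁ γ₂ s = (1 + s) ^ (-γ₁) := by
      rw [sq, βex, φex, ← Real.rpow_add h1s, ← Real.rpow_sub h1s]
      congr 1; ring
    exact ⟨key, by rw [key, one_mul]⟩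
  refine ⟨⟨1, one_pos, 1, one_pos, fun s hs => ⟨by rw [one_mul]; exact le_refl _,
    by rw [one_mul]; exact le_refl _⟩⟩, ?_⟩
  -- (G1) and (H1) with s₀ = 3, a = 1/γ₂, μ = 1/2, b = 2/(γ₂*(1-γ₂))
  have hbpos : (0:ℝ) < 2/(γ₂*(1-γ₂)) := by positivity
  refine ⟨3, by norm_num, 1/γ₂, by positivity, 1/2, ⟨by norm_num, by norm_num⟩,
    2/(γ₂*(1-γ₂)), hbpos, ?_, ?_⟩
  · -- G1
    intro s hs
    have hs3 : (3:ℝ) ≤ s := hs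
    have hs0 : (0:ℝ) < s := by linarith
    -- the inner integrand is continuous on [3, s]
    have hcont : ContinuousOn (fun τ => φex γ₁ γ₂ τ / ψex γ₁ γ₂ τ) (Icc 3 s) := by
      simp only [φex, ψex, βex]
      apply ContinuousOn.div
      · apply (continuousOn_const.add continuousOn_id).rpow_const
        intro x hx
        left
        simp only [mem_Icc] at hx
        try simp only [id_eq]
        intro h
        simp only [Pi.add_apply, id_eq] at h
        linarith [hx.1]
      · apply continuousOn_id.mul
        apply (continuousOn_const.add continuousOn_id).rpow_const
        intro x hx
        left
        simp only [mem_Icc] at hx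
        try simp only [id_eq]
        intro h
        simp only [Pi.add_apply, id_eq] at h
        linarith [hx.1]
      · intro x hx
        simp only [mem_Icc] at hx
        have hx0 : (0:ℝ) < x := by linarith [hx.1]
        have h1x : (0:ℝ) < 1 + x := by linarith
        try simp only [id_eq]
        positivity
    have huIcc : uIcc (3:ℝ) s = Icc 3 s := uIcc_of_le hs3
    -- inner integral bound: for σ ∈ [3, s], ∫_{3}^σ φ/ψ ≤ 1/γ₂
    have hinner : ∀ σ ∈ Icc (3:ℝ) s,
        (∫ τ in (3:ℝ)..σ, φex γ₁ γ₂ τ / ψex γ₁ γ₂ τ) ≤ 1/γ₂ := by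
      intro σ hσ
      simp only [mem_Icc] at hσ
      have hσ3 : (3:ℝ) ≤ σ := hσ.1
      have hσpos : (0:ℝ) < σ := by linarith
      have hcont' : ContinuousOn (fun τ => φex γ₁ γ₂ τ / ψex γ₁ γ₂ τ) (Icc 3 σ) :=
        hcont.mono (Icc_subset_Icc le_rfl hσ.2)
      have hint1 : IntervalIntegrable (fun τ => φex γ₁ γ₂ τ / ψex γ₁ γ₂ τ)
          volume 3 σ := (hcont'.mono (by rw [uIcc_of_le hσ3])).intervalIntegrable
      have hint2 : IntervalIntegrable (fun τ => τ ^ (-(γ₂+1))) volume 3 σ := by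
        apply ContinuousOn.intervalIntegrable
        apply ContinuousOn.rpow_const continuousOn_id
        intro x hx
        rw [uIcc_of_le hσ3] at hx
        simp only [mem_Icc] at hx
        exact Or.inl (by simp only [id_eq]; intro h; linarith [hx.1])
      have hmono : (∫ τ in (3:ℝ)..σ, φex γ₁ γ₂ τ / ψex γ₁ γ₂ τ)
          ≤ ∫ τ in (3:ℝ)..σ, τ ^ (-(γ₂+1)) := by
        apply intervalIntegral.integral_mono_on hσ3 hint1 hint2
        intro τ hτ
        simp only [mem_Icc] at hτ
        have hτ0 : (0:ℝ) < τ := by linarith [hτ.1]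
        have h1τ : (0:ℝ) < 1 + τ := by linarith
        rw [ratio_eq γ₁ γ₂ τ (ne_of_gt hτ0) h1τ]
        have h1 : (1 + τ) ^ (-γ₂) ≤ τ ^ (-γ₂) :=
          Real.rpow_le_rpow_of_nonpos hτ0 (by linarith) (by linarith)
        have h2 : τ ^ (-(γ₂+1)) = τ ^ (-γ₂) / τ := by
          rw [show -(γ₂+1) = -γ₂ - 1 by ring, Real.rpow_sub hτ0, Real.rpow_one]
        rw [h2]
        gcongr
      calc (∫ τ in (3:ℝ)..σ, φex γ₁ γ₂ τ / ψex γ₁ γ₂ τ)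
          ≤ ∫ τ in (3:ℝ)..σ, τ ^ (-(γ₂+1)) := hmono
        _ = (σ ^ (-(γ₂+1)+1) - 3 ^ (-(γ₂+1)+1)) / (-(γ₂+1)+1) := by
            apply integral_rpow
            right
            constructor
            · intro h
              have : γ₂ = 0 := by linarith [neg_eq_iff_eq_neg.mp h]
              linarith
            · rw [uIcc_of_le hσ3]; simp only [mem_Icc]; push_neg; intro h; linarith
        _ = (3 ^ (-γ₂) - σ ^ (-γ₂)) / γ₂ := by
            rw [show -(γ₂+1)+1 = -γ₂ by ring]
            rw [div_eq_div_iff (neg_ne_zero.mpr (ne_of_gt hγ₂0)) (ne_of_gt hγ₂0)]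
            ring
        _ ≤ 1/γ₂ := by
            have h3 : (3:ℝ) ^ (-γ₂) ≤ 1 := by
              rw [show (1:ℝ) = (3:ℝ) ^ (0:ℝ) by simp]
              exact Real.rpow_le_rpow_of_exponent_le (by norm_num) (by linarith)
            have hσn : (0:ℝ) ≤ σ ^ (-γ₂) := le_of_lt (Real.rpow_pos_of_pos hσpos _)
            gcongr
            linarith
    -- the primitive is continuous, hence integrable
    have hIOn : IntegrableOn (fun τ => φex γ₁ γ₂ τ / ψex γ₁ γ₂ τ) (uIcc 3 s) volume := by
      rw [huIcc]
      exact hcont.integrableOn_compact isCompact_Icc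
    have hIint : IntervalIntegrable
        (fun σ => ∫ τ in (3:ℝ)..σ, φex γ₁ γ₂ τ / ψex γ₁ γ₂ τ) volume 3 s :=
      (intervalIntegral.continuousOn_primitive_interval hIOn).intervalIntegrable
    have hGle : Gfun (φex γ₁ γ₂) (ψex γ₁ γ₂) 3 s ≤ (s - 3) * (1/γ₂) := by
      rw [Gfun]
      calc (∫ σ in (3:ℝ)..s, ∫ τ in (3:ℝ)..σ, φex γ₁ γ₂ τ / ψex γ₁ γ₂ τ)
          ≤ ∫ _ in (3:ℝ)..s, 1/γ₂ := by
            apply intervalIntegral.integral_mono_on hs3 hIint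
              intervalIntegrable_const
            intro σ hσ; exact hinner σ hσ
        _ = (s - 3) * (1/γ₂) := by rw [intervalIntegral.integral_const]; simp
    have hlog : (1:ℝ) ≤ Real.log s ^ ((1:ℝ)/2) := by
      have hls : (1:ℝ) ≤ Real.log s := by
        have h1 := lt_log_three
        have h2 := Real.log_le_log (by norm_num : (0:ℝ) < 3) hs3
        linarith
      calc (1:ℝ) = Real.log s ^ (0:ℝ) := by rw [Real.rpow_zero]
        _ ≤ Real.log s ^ ((1:ℝ)/2) :=
            Real.rpow_le_rpow_of_exponent_le hls (by norm_num)
    calc Gfun (φex γ₁ γ₂) (ψex γ₁ γ₂) 3 s ≤ (s - 3) * (1/γ₂) := hGle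
      _ ≤ s * (1/γ₂) := by
          apply mul_le_mul_of_nonneg_right (by linarith) (by positivity)
      _ = 1/γ₂ * s * 1 := by ring
      _ ≤ 1/γ₂ * s * Real.log s ^ ((1:ℝ)/2) := by
          apply mul_le_mul_of_nonneg_left hlog (by positivity)
  · -- H1
    intro s hs
    have hs3 : (3:ℝ) ≤ s := hs
    have hs0 : (0:ℝ) < s := by linarith
    -- Hfun equals the integral of (1+σ)^{-γ₂}
    have hHeq : Hfun (φex γ₁ γ₂) (ψex γ₁ γ₂) s
        = ∫ σ in (0:ℝ)..s, (1 + σ) ^ (-γ₂) := by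
      rw [Hfun]
      apply intervalIntegral.integral_congr_ae
      filter_upwards with σ hσ
      rw [uIoc_of_le (by linarith : (0:ℝ) ≤ s)] at hσ
      have hσ0 : (0:ℝ) < σ := hσ.1
      have h1σ : (0:ℝ) < 1 + σ := by linarith
      rw [mul_div_assoc, ratio_eq γ₁ γ₂ σ (ne_of_gt hσ0) h1σ]
      field_simp
    have hHval : Hfun (φex γ₁ γ₂) (ψex γ₁ γ₂) s
        = ((1+s) ^ (1-γ₂) - 1) / (1-γ₂) := by
      rw [hHeq]
      have heq2 : (∫ σ in (0:ℝ)..s, (1 + σ) ^ (-γ₂))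
          = ∫ x in (1+(0:ℝ))..(1+s), x ^ (-γ₂) :=
        intervalIntegral.integral_comp_add_left (fun x => x ^ (-γ₂)) 1
      rw [heq2, integral_rpow (Or.inl (by linarith)),
        show (1:ℝ)+0 = 1 from by norm_num, Real.one_rpow,
        show -γ₂+1 = 1-γ₂ by ring]
    rw [hHval]
    have hlogs : (0:ℝ) < Real.log s := by
      have h1 := lt_log_three
      have h2 := Real.log_le_log (by norm_num : (0:ℝ) < 3) hs3
      linarith
    rw [div_le_div_iff₀ h1γ₂ hlogs]
    -- goal: ((1+s)^(1-γ₂) - 1) * log s ≤ (2/(γ₂*(1-γ₂)) * s) * (1-γ₂)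
    have hA : (1+s) ^ (1-γ₂) - 1 ≤ 2 * s ^ (1-γ₂) := by
      have h1 : (1+s) ^ (1-γ₂) ≤ (2*s) ^ (1-γ₂) :=
        Real.rpow_le_rpow (by linarith) (by linarith) (le_of_lt h1γ₂)
      have h2 : (2*s) ^ (1-γ₂) = 2 ^ (1-γ₂) * s ^ (1-γ₂) :=
        Real.mul_rpow (by norm_num) (le_of_lt hs0)
      have h3 : (2:ℝ) ^ (1-γ₂) ≤ 2 := by
        calc (2:ℝ) ^ (1-γ₂) ≤ 2 ^ (1:ℝ) :=
              Real.rpow_le_rpow_of_exponent_le one_le_two (by linarith)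
          _ = 2 := Real.rpow_one 2
      have h4 := mul_le_mul_of_nonneg_right h3 (Real.rpow_nonneg (le_of_lt hs0) (1-γ₂))
      linarith
    have hB : Real.log s ≤ s ^ γ₂ / γ₂ := by
      have h1 : Real.log (s ^ γ₂) = γ₂ * Real.log s := Real.log_rpow hs0 γ₂
      have h2 : Real.log (s ^ γ₂) ≤ s ^ γ₂ - 1 :=
        Real.log_le_sub_one_of_pos (Real.rpow_pos_of_pos hs0 γ₂)
      rw [le_div_iff₀ hγ₂0]
      nlinarith
    have hAnn : (0:ℝ) ≤ 2 * s ^ (1-γ₂) := by positivity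
    calc ((1+s) ^ (1-γ₂) - 1) * Real.log s
        ≤ (2 * s ^ (1-γ₂)) * (s ^ γ₂ / γ₂) :=
          mul_le_mul hA hB (le_of_lt hlogs) hAnn
      _ = 2 * (s ^ (1-γ₂) * s ^ γ₂) / γ₂ := by ring
      _ = 2 * s / γ₂ := by
          rw [← Real.rpow_add hs0]
          norm_num
      _ = 2/(γ₂*(1-γ₂)) * s * (1-γ₂) := by
          field_simp
end
end

section
/- Let R > 0, δ ∈ (0, 2/R), and let v ∈ C¹([0,R]). Then for every r ∈ (0,R): ∫_0^r e^{δ(r−ρ)} ρ² (v²)'(ρ) dρ ≤ r² v²(r). -/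
open MeasureTheory Real Set

/-- For `R > 0`, `δ ∈ (0, 2/R)` and `v ∈ C¹([0,R])` (with derivative `v'`),
for every `r ∈ (0,R)` one has `∫_0^r e^{δ(r−ρ)} ρ² (v²)'(ρ) dρ ≤ r² v(r)²`. -/
theorem radial_weighted_square_estimate
    (R : ℝ) (hR : 0 < R) (δ : ℝ) (hδ : δ ∈ Ioo (0 : ℝ) (2 / R))
    (v v' : ℝ → ℝ)
    (hv : ∀ ρ ∈ Icc (0 : ℝ) R, HasDerivAt v (v' ρ) ρ)
    (hv' : ContinuousOn v' (Icc (0 : ℝ) R)) :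
    ∀ r ∈ Ioo (0 : ℝ) R,
      (∫ ρ in (0:ℝ)..r, Real.exp (δ * (r - ρ)) * ρ ^ 2 * (2 * v ρ * v' ρ))
        ≤ r ^ 2 * v r ^ 2 := by
  rintro r ⟨hr0, hrR⟩
  obtain ⟨hδ0, hδ2⟩ := hδ
  have hδR : δ * R < 2 := (lt_div_iff₀ hR).mp hδ2
  set u : ℝ → ℝ := fun ρ => Real.exp (δ * (r - ρ)) * ρ ^ 2 with hu_def
  set u' : ℝ → ℝ := fun ρ => Real.exp (δ * (r - ρ)) * (2 * ρ - δ * ρ ^ 2) with hu'_def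
  have huIcc : uIcc (0:ℝ) r = Icc 0 r := uIcc_of_le hr0.le
  have hsub : uIcc (0:ℝ) r ⊆ Icc 0 R := by
    rw [huIcc]; exact Icc_subset_Icc le_rfl hrR.le
  have hu : ∀ x ∈ uIcc (0:ℝ) r, HasDerivAt u (u' x) x := by
    intro x hx
    have h1 : HasDerivAt (fun ρ : ℝ => Real.exp (δ * (r - ρ)))
        (Real.exp (δ * (r - x)) * (-δ)) x := by
      have hl : HasDerivAt (fun ρ : ℝ => δ * (r - ρ)) (-δ) x := by
        simpa using ((hasDerivAt_id x).const_sub r).const_mul δ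
      simpa [mul_comm] using hl.exp
    have h2 : HasDerivAt (fun ρ : ℝ => ρ ^ 2) (2 * x) x := by
      simpa using hasDerivAt_pow 2 x
    have := h1.fun_mul h2
    refine this.congr_deriv ?_
    simp only [hu'_def]
    ring
  have hw : ∀ x ∈ uIcc (0:ℝ) r, HasDerivAt (fun ρ => v ρ ^ 2) (2 * v x * v' x) x := by
    intro x hx
    have := (hv x (hsub hx)).fun_pow 2
    simpa [mul_comm, mul_assoc] using this
  have hu'cont : Continuous u' := by
    apply Continuous.mul
    · exact (Real.continuous_exp.comp (continuous_const.mul (continuous_const.sub continuous_id)))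
    · continuity
  have hvcont : ContinuousOn v (Icc (0:ℝ) R) := fun x hx =>
    (hv x hx).continuousAt.continuousWithinAt
  have hint_u' : IntervalIntegrable u' volume 0 r := hu'cont.intervalIntegrable 0 r
  have hint_w' : IntervalIntegrable (fun x => 2 * v x * v' x) volume 0 r := by
    apply ContinuousOn.intervalIntegrable
    apply ContinuousOn.mul _ (hv'.mono hsub)
    exact (continuousOn_const.mul (hvcont.mono hsub))
  have key := intervalIntegral.integral_mul_deriv_eq_deriv_mul hu hw hint_u' hint_w'
  have hur : u r = r ^ 2 := by simp [hu_def]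
  have hu0 : u 0 = 0 := by simp [hu_def]
  have hnonneg : 0 ≤ ∫ x in (0:ℝ)..r, u' x * v x ^ 2 := by
    apply intervalIntegral.integral_nonneg hr0.le
    intro x hx
    have hx0 : 0 ≤ x := hx.1
    have hxR : x ≤ R := hx.2.trans hrR.le
    have h2 : 0 ≤ 2 * x - δ * x ^ 2 := by nlinarith
    have := mul_nonneg (mul_nonneg (Real.exp_pos (δ * (r - x))).le h2) (sq_nonneg (v x))
    simpa [hu'_def] using this
  calc (∫ ρ in (0:ℝ)..r, Real.exp (δ * (r - ρ)) * ρ ^ 2 * (2 * v ρ * v' ρ))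
      = ∫ x in (0:ℝ)..r, u x * (2 * v x * v' x) := by rfl
    _ = u r * v r ^ 2 - u 0 * v 0 ^ 2 - ∫ x in (0:ℝ)..r, u' x * v x ^ 2 := key
    _ ≤ u r * v r ^ 2 - u 0 * v 0 ^ 2 := by linarith
    _ = r ^ 2 * v r ^ 2 := by rw [hur, hu0]; ring
end

section
/- Let φ, ψ ∈ C²([0,∞)) satisfy φ(s) > 0 and ψ(s) = s·β(s) with β ∈ C²([0,∞)), β(s) > 0 for all s ≥ 0, and assume there are b > 0 and s₀ > 1 such that H(s) ≤ b·s/ln s for all s ≥ s₀, where H(s) := ∫_0^s σφ(σ)/ψ(σ) dσ. Let R > 0, δ > 0, m > 0, and let u ∈ C⁰([0,R]) be positive with 2π∫_0^R ρ u(ρ) dρ = m. Then there exists a constant c > 0, depending only on φ, ψ, δ and R, such that for every r₀ ∈ (0,R]: 8π e^{δR} ∫_0^{r₀} r^{−1} ∫_0^r ρ H(u(ρ)) dρ dr ≤ c·(R² + m). -/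
open MeasureTheory Real Set Topology Filter

noncomputable section

set_option maxHeartbeats 1000000

lemma young_ineq (A B : ℝ) (hB : 0 < B) :
    A * B ≤ Real.exp A / Real.exp 1 + B * Real.log B := by
  have h := Real.add_one_le_exp (A - Real.log B - 1)
  have h2 : B * (A - Real.log B) ≤ B * Real.exp (A - Real.log B - 1) := by
    nlinarith
  have h3 : B * Real.exp (A - Real.log B - 1) = Real.exp A / Real.exp 1 := by
    rw [show A - Real.log B - 1 = A - (Real.log B + 1) by ring, Real.exp_sub, Real.exp_add,
      Real.exp_log hB]
    field_simp
  nlinarith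

/-- the bound `8π e^{δR} ∫_0^{r₀} r^{−1} ∫_0^r ρ H(u(ρ)) dρ dr ≤ c·(R² + m)`,
with `c` depending only on `φ, ψ, δ, R` (not on `u`, `m`, `r₀`). -/
theorem double_integral_H_bound
    (φ ψ β : ℝ → ℝ)
    (hφC2 : ContDiffOn ℝ 2 φ (Ici 0)) (hψC2 : ContDiffOn ℝ 2 ψ (Ici 0))
    (hβC2 : ContDiffOn ℝ 2 β (Ici 0))
    (hφpos : ∀ s ≥ (0:ℝ), 0 < φ s)
    (hψβ : ∀ s ≥ (0:ℝ), ψ s = s * β s)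
    (hβpos : ∀ s ≥ (0:ℝ), 0 < β s)
    (b s₀ : ℝ) (hb : 0 < b) (hs₀ : 1 < s₀)
    (hH1 : ∀ s ≥ s₀, Hfun φ ψ s ≤ b * s / Real.log s)
    (R δ : ℝ) (hR : 0 < R) (hδ : 0 < δ) :
    ∃ c > 0, ∀ m > (0:ℝ), ∀ u : ℝ → ℝ,
      ContinuousOn u (Icc (0:ℝ) R) →
      (∀ ρ ∈ Icc (0:ℝ) R, 0 < u ρ) →
      2 * π * (∫ ρ in (0:ℝ)..R, ρ * u ρ) = m →
      ∀ r₀ ∈ Ioc (0:ℝ) R,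
        8 * π * Real.exp (δ * R) *
            (∫ r in (0:ℝ)..r₀, r⁻¹ * ∫ ρ in (0:ℝ)..r, ρ * Hfun φ ψ (u ρ))
          ≤ c * (R ^ 2 + m) := by
  set g : ℝ → ℝ := fun σ => φ σ / β σ with hg
  have hgcont : ContinuousOn g (Ici 0) :=
    (hφC2.continuousOn).div (hβC2.continuousOn) (fun s hs => (hβpos s hs).ne')
  have hgpos : ∀ s ≥ (0:ℝ), 0 < g s := fun s hs => div_pos (hφpos s hs) (hβpos s hs)
  set H : ℝ → ℝ := fun s => ∫ σ in (0:ℝ)..s, g σ with hH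
  have hgint : ∀ M ≥ (0:ℝ), IntegrableOn g (Icc 0 M) :=
    fun M hM => (hgcont.mono (Icc_subset_Ici_self)).integrableOn_Icc
  have hHeq : ∀ s ≥ (0:ℝ), Hfun φ ψ s = H s := by
    intro s hs
    apply intervalIntegral.integral_congr_ae
    filter_upwards with x hx
    rw [Set.uIoc_of_le hs] at hx
    rw [hψβ x hx.1.le, mul_div_mul_left _ _ (ne_of_gt hx.1)]
  have hHcont : ∀ M ≥ (0:ℝ), ContinuousOn H (Icc 0 M) := by
    intro M hM
    have := intervalIntegral.continuousOn_primitive_interval (a := (0:ℝ)) (b := M)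
      (f := g) (μ := volume) (by rw [Set.uIcc_of_le hM]; exact hgint M hM)
    rwa [Set.uIcc_of_le hM] at this
  have hHpos : ∀ s > (0:ℝ), 0 < H s := by
    intro s hs
    apply intervalIntegral.intervalIntegral_pos_of_pos_on
    · have h1 : IntegrableOn g (Set.uIcc 0 s) volume := by
        rw [Set.uIcc_of_le hs.le]; exact hgint s hs.le
      exact h1.intervalIntegrable
    · exact fun x hx => hgpos x hx.1.le
    · exact hs
  -- the c₂ bound
  set s₁ : ℝ := max s₀ (Real.exp 1) with hs₁
  have hs₁0 : (0:ℝ) ≤ s₁ := le_trans (by norm_num) (le_trans hs₀.le (le_max_left _ _))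
  obtain ⟨x₀, hx₀s, hx₀max⟩ : ∃ x₀ ∈ Icc (0:ℝ) s₁,
      ∀ y ∈ Icc (0:ℝ) s₁, H y * Real.log (H y) ≤ H x₀ * Real.log (H x₀) := by
    obtain ⟨x₀, hx₀s, hmax⟩ := isCompact_Icc.exists_isMaxOn (nonempty_Icc.2 hs₁0)
      (Real.continuous_mul_log.comp_continuousOn (hHcont s₁ hs₁0))
    exact ⟨x₀, hx₀s, fun y hy => (hmax hy : _)⟩
  set c₂ : ℝ := max (max (H x₀ * Real.log (H x₀)) 1) (b * (1 + |Real.log b|)) with hc₂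
  have hc₂pos : 0 < c₂ := lt_of_lt_of_le one_pos (le_trans (le_max_right _ _) (le_max_left _ _))
  have hHlog : ∀ s ≥ (0:ℝ), H s * Real.log (H s) ≤ c₂ * (1 + s) := by
    intro s hs
    have h1s : (1:ℝ) ≤ 1 + s := by linarith
    rcases le_or_gt s s₁ with hcase | hcase
    · have := hx₀max s ⟨hs, hcase⟩
      have h2 : H x₀ * Real.log (H x₀) ≤ c₂ := le_trans (le_max_left _ _) (le_max_left _ _)
      nlinarith
    · have hss₀ : s₀ ≤ s := le_trans (le_max_left _ _) hcase.le
      have hes : Real.exp 1 ≤ s := le_trans (le_max_right _ _) hcase.le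
      have hs1 : (1:ℝ) < s := lt_of_lt_of_le hs₀ hss₀
      have hlogs : 1 ≤ Real.log s := (Real.le_log_iff_exp_le (by linarith)).2 hes
      have hHb : H s ≤ b * s / Real.log s := by
        rw [← hHeq s hs]; exact hH1 s hss₀
      have hHspos : 0 < H s := hHpos s (by linarith)
      rcases le_or_gt (H s) (Real.exp 1) with hsmall | hbig
      · rcases le_or_gt (Real.log (H s)) 0 with hneg | hposl
        · nlinarith
        · have : Real.log (H s) ≤ 1 := by
            calc Real.log (H s) ≤ Real.log (Real.exp 1) := Real.log_le_log hHspos hsmall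
            _ = 1 := Real.log_exp 1
          have hc₂1 : (1:ℝ) ≤ c₂ := le_trans (le_max_right _ _) (le_max_left _ _)
          have h5 : H s * Real.log (H s) ≤ s := by nlinarith
          nlinarith
      · have hlogH1 : 1 ≤ Real.log (H s) := by
          rw [← Real.log_exp 1]
          exact Real.log_le_log (Real.exp_pos 1) hbig.le
        have hbs : 0 < b * s / Real.log s := by positivity
        have hlogH : Real.log (H s) ≤ Real.log b + Real.log s - Real.log (Real.log s) := by
          calc Real.log (H s) ≤ Real.log (b * s / Real.log s) :=
            Real.log_le_log hHspos hHb
          _ = Real.log b + Real.log s - Real.log (Real.log s) := by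
            rw [Real.log_div (by positivity) (by linarith), Real.log_mul hb.ne' (by linarith)]
      
        have hloglog : 0 ≤ Real.log (Real.log s) := Real.log_nonneg hlogs
        have hlogH' : Real.log (H s) ≤ |Real.log b| + Real.log s := by
          have : Real.log b ≤ |Real.log b| := le_abs_self _
          linarith
        have step1 : H s * Real.log (H s) ≤ (b * s / Real.log s) * Real.log (H s) :=
          mul_le_mul_of_nonneg_right hHb (by linarith)
        have step2 : (b * s / Real.log s) * Real.log (H s)
            ≤ (b * s / Real.log s) * (|Real.log b| + Real.log s) :=
          mul_le_mul_of_nonneg_left hlogH' hbs.le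
        have step3 : (b * s / Real.log s) * (|Real.log b| + Real.log s)
            = b * s * |Real.log b| / Real.log s + b * s := by
          field_simp
        have step4 : b * s * |Real.log b| / Real.log s ≤ b * s * |Real.log b| := by
          apply div_le_self (by positivity) hlogs
        have hc₂b : b * (1 + |Real.log b|) ≤ c₂ := le_max_right _ _
        have : H s * Real.log (H s) ≤ b * s * |Real.log b| + b * s := by linarith
        nlinarith [abs_nonneg (Real.log b), hb.le, hs1.le]
  -- choose the constant
  refine ⟨8 * π * Real.exp (δ * R) * (1 + c₂), by positivity, ?_⟩
  intro m hm u hucont hupos hmass r₀ hr₀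
  obtain ⟨hr₀pos, hr₀R⟩ := hr₀
  have hRIcc : Icc (0:ℝ) r₀ ⊆ Icc (0:ℝ) R := Icc_subset_Icc le_rfl hr₀R
  -- bound for u
  obtain ⟨xu, hxu, hxumax⟩ := isCompact_Icc.exists_isMaxOn (nonempty_Icc.2 hR.le) hucont
  set Mu : ℝ := u xu with hMu
  have hMub : ∀ ρ ∈ Icc (0:ℝ) R, u ρ ≤ Mu := fun ρ hρ => hxumax hρ
  have hMu0 : 0 ≤ Mu := (hupos xu hxu).le
  -- h = H ∘ u
  set h : ℝ → ℝ := fun ρ => H (u ρ) with hh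
  have hhcont : ContinuousOn h (Icc 0 R) := by
    apply (hHcont Mu hMu0).comp hucont
    intro ρ hρ
    exact ⟨(hupos ρ hρ).le, hMub ρ hρ⟩
  have hhpos : ∀ ρ ∈ Icc (0:ℝ) R, 0 < h ρ := fun ρ hρ => hHpos (u ρ) (hupos ρ hρ)
  obtain ⟨xh, hxh, hxhmax⟩ := isCompact_Icc.exists_isMaxOn (nonempty_Icc.2 hR.le) hhcont
  set Mh : ℝ := h xh with hMh
  have hMhb : ∀ ρ ∈ Icc (0:ℝ) R, h ρ ≤ Mh := fun ρ hρ => hxhmax hρ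
  have hMh0 : 0 ≤ Mh := (hhpos xh hxh).le
  -- f and F
  set f : ℝ → ℝ := fun ρ => ρ * h ρ with hf
  have hfcont : ContinuousOn f (Icc 0 R) := continuousOn_id.mul hhcont
  have hfint : IntegrableOn f (Icc 0 R) := hfcont.integrableOn_Icc
  have hfii : ∀ t ∈ Icc (0:ℝ) R, IntervalIntegrable f volume 0 t := by
    intro t ht
    have h1 : IntegrableOn f (Set.uIcc 0 t) volume := by
      rw [Set.uIcc_of_le ht.1]
      exact hfint.mono_set (Icc_subset_Icc le_rfl ht.2)
    exact h1.intervalIntegrable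
  set F : ℝ → ℝ := fun r => ∫ ρ in (0:ℝ)..r, f ρ with hF
  have hFcont : ContinuousOn F (Icc 0 R) := by
    have h1 : IntegrableOn f (Set.uIcc 0 R) volume := by rw [Set.uIcc_of_le hR.le]; exact hfint
    have := intervalIntegral.continuousOn_primitive_interval (a := (0:ℝ)) (b := R) h1
    rwa [Set.uIcc_of_le hR.le] at this
  have hFbound : ∀ r ∈ Icc (0:ℝ) R, |F r| ≤ R * Mh * r := by
    intro r hr
    have := intervalIntegral.norm_integral_le_of_norm_le_const (C := R * Mh) (f := f)
      (a := 0) (b := r) ?_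
    · rw [Real.norm_eq_abs] at this
      simpa [abs_of_nonneg hr.1] using this
    · intro x hx
      rw [Set.uIoc_of_le hr.1] at hx
      have hx' : x ∈ Icc (0:ℝ) R := ⟨hx.1.le, hx.2.trans hr.2⟩
      rw [Real.norm_eq_abs, abs_of_nonneg (mul_nonneg hx.1.le (hhpos x hx').le)]
      exact mul_le_mul (hx.2.trans hr.2) (hMhb x hx') (hhpos x hx').le hR.le
  -- q and its integrability
  set q : ℝ → ℝ := fun r => r⁻¹ * F r with hq
  have hqmeas : AEStronglyMeasurable q (volume.restrict (Icc 0 r₀)) := by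
    exact ((measurable_inv.aemeasurable.aestronglyMeasurable))|>.mul
      ((hFcont.mono hRIcc).aestronglyMeasurable measurableSet_Icc)
  have hqint : IntegrableOn q (Icc 0 r₀) := by
    apply Integrable.mono' (integrable_const (R * Mh)) hqmeas
    filter_upwards [ae_restrict_mem measurableSet_Icc] with r hr
    rcases eq_or_lt_of_le hr.1 with hr0 | hr0
    · simp [hq, ← hr0]
      positivity
    · have hrR : r ∈ Icc (0:ℝ) R := hRIcc hr
      rw [Real.norm_eq_abs, hq]
      have := hFbound r hrR
      rw [abs_mul, abs_inv, abs_of_nonneg hr.1]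
      calc r⁻¹ * |F r| ≤ r⁻¹ * (R * Mh * r) := by
            apply mul_le_mul_of_nonneg_left this (by positivity)
      _ = R * Mh := by field_simp
  have hqii : ∀ t ∈ Icc (0:ℝ) r₀, IntervalIntegrable q volume 0 t := by
    intro t ht
    have h1 : IntegrableOn q (Set.uIcc 0 t) volume := by
      rw [Set.uIcc_of_le ht.1]
      exact hqint.mono_set (Icc_subset_Icc le_rfl ht.2)
    exact h1.intervalIntegrable
  have hqcontOn : ContinuousOn q (Ioo 0 R) := by
    apply ContinuousOn.mul
    · exact (continuousOn_inv₀).mono (fun x hx => (ne_of_gt hx.1 : x ≠ 0))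
    · exact hFcont.mono Ioo_subset_Icc_self
  -- L and its primitive
  set L : ℝ → ℝ := fun ρ => Real.log ρ * f ρ with hL
  have hLcont : ContinuousOn L (Icc 0 R) := by
    have heq : ∀ ρ : ℝ, L ρ = (ρ * Real.log ρ) * h ρ := by
      intro ρ; simp only [hL, hf]; ring
    simp only [funext heq]
    exact (Real.continuous_mul_log.continuousOn).mul hhcont
  have hLint : IntegrableOn L (Icc 0 R) := hLcont.integrableOn_Icc
  have hLii : ∀ t ∈ Icc (0:ℝ) R, IntervalIntegrable L volume 0 t := by
    intro t ht
    have h1 : IntegrableOn L (Set.uIcc 0 t) volume := by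
      rw [Set.uIcc_of_le ht.1]
      exact hLint.mono_set (Icc_subset_Icc le_rfl ht.2)
    exact h1.intervalIntegrable
  set Lprim : ℝ → ℝ := fun t => ∫ ρ in (0:ℝ)..t, L ρ with hLprim
  have hLprimcont : ContinuousOn Lprim (Icc 0 R) := by
    have h1 : IntegrableOn L (Set.uIcc 0 R) volume := by rw [Set.uIcc_of_le hR.le]; exact hLint
    have := intervalIntegral.continuousOn_primitive_interval (a := (0:ℝ)) (b := R) h1
    rwa [Set.uIcc_of_le hR.le] at this
  -- Φ and G
  set Φ : ℝ → ℝ := fun t => ∫ r in (0:ℝ)..t, q r with hΦ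
  have hΦcont : ContinuousOn Φ (Icc 0 r₀) := by
    have h1 : IntegrableOn q (Set.uIcc 0 r₀) volume := by
      rw [Set.uIcc_of_le hr₀pos.le]; exact hqint
    have := intervalIntegral.continuousOn_primitive_interval (a := (0:ℝ)) (b := r₀) h1
    rwa [Set.uIcc_of_le hr₀pos.le] at this
  set G : ℝ → ℝ := fun t => Real.log t * F t - Lprim t with hG
  -- derivatives
  have hderivF : ∀ y ∈ Ioo (0:ℝ) R, HasDerivAt F (f y) y := by
    intro y hy
    exact intervalIntegral.integral_hasDerivAt_right (hfii y ⟨hy.1.le, hy.2.le⟩)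
      (ContinuousOn.stronglyMeasurableAtFilter isOpen_Ioo (hfcont.mono Ioo_subset_Icc_self) y hy)
      ((hfcont.mono Ioo_subset_Icc_self).continuousAt (isOpen_Ioo.mem_nhds hy))
  have hderivL : ∀ y ∈ Ioo (0:ℝ) R, HasDerivAt Lprim (L y) y := by
    intro y hy
    exact intervalIntegral.integral_hasDerivAt_right (hLii y ⟨hy.1.le, hy.2.le⟩)
      (ContinuousOn.stronglyMeasurableAtFilter isOpen_Ioo (hLcont.mono Ioo_subset_Icc_self) y hy)
      ((hLcont.mono Ioo_subset_Icc_self).continuousAt (isOpen_Ioo.mem_nhds hy))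
  have hderivΦ : ∀ y ∈ Ioo (0:ℝ) r₀, HasDerivAt Φ (q y) y := by
    intro y hy
    have hyR : y ∈ Ioo (0:ℝ) R := ⟨hy.1, lt_of_lt_of_le hy.2 hr₀R⟩
    exact intervalIntegral.integral_hasDerivAt_right (hqii y ⟨hy.1.le, hy.2.le⟩)
      (ContinuousOn.stronglyMeasurableAtFilter isOpen_Ioo hqcontOn y hyR)
      (hqcontOn.continuousAt (isOpen_Ioo.mem_nhds hyR))
  have hderivG : ∀ y ∈ Ioo (0:ℝ) r₀, HasDerivAt G (q y) y := by
    intro y hy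
    have hyR : y ∈ Ioo (0:ℝ) R := ⟨hy.1, lt_of_lt_of_le hy.2 hr₀R⟩
    have h1 := (Real.hasDerivAt_log (ne_of_gt hy.1)).mul (hderivF y hyR)
    have h2 := h1.sub (hderivL y hyR)
    have h3 : HasDerivAt G (y⁻¹ * F y + Real.log y * f y - L y) y := h2
    have e : q y = y⁻¹ * F y + Real.log y * f y - L y := by
      show y⁻¹ * F y = y⁻¹ * F y + Real.log y * f y - Real.log y * f y
      ring
    rw [e]
    exact h3
  -- key equality on [a, r₀]
  have key : ∀ a ∈ Ioo (0:ℝ) r₀, Φ r₀ - G r₀ = Φ a - G a := by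
    intro a ha
    have hsub : Icc a r₀ ⊆ Icc 0 r₀ := Icc_subset_Icc ha.1.le le_rfl
    have derivf : ∀ y ∈ Ico a r₀, HasDerivWithinAt Φ (q y) (Ici y) y := fun y hy =>
      (hderivΦ y ⟨lt_of_lt_of_le ha.1 hy.1, hy.2⟩).hasDerivWithinAt
    have derivg : ∀ y ∈ Ico a r₀,
        HasDerivWithinAt (fun t => G t - G a + Φ a) (q y) (Ici y) y := fun y hy =>
      (((hderivG y ⟨lt_of_lt_of_le ha.1 hy.1, hy.2⟩).sub_const (G a)).add_const
        (Φ a)).hasDerivWithinAt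
    have contΦ : ContinuousOn Φ (Icc a r₀) := hΦcont.mono hsub
    have contG : ContinuousOn (fun t => G t - G a + Φ a) (Icc a r₀) := by
      apply ContinuousOn.add _ continuousOn_const
      apply ContinuousOn.sub _ continuousOn_const
      have hsub2 : Icc a r₀ ⊆ Icc 0 R := fun x hx => ⟨le_trans ha.1.le hx.1, le_trans hx.2 hr₀R⟩
      exact ((Real.continuousOn_log.mono (fun x hx =>
          (ne_of_gt (lt_of_lt_of_le ha.1 hx.1) : x ≠ 0))).mul (hFcont.mono hsub2)).sub
        (hLprimcont.mono hsub2)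
    have := eq_of_has_deriv_right_eq derivf derivg contΦ contG (by ring) r₀ ⟨ha.2.le, le_rfl⟩
    linarith [this]
  -- limits as a → 0⁺
  have hne : (𝓝[Ioo (0:ℝ) r₀] 0).NeBot := left_nhdsWithin_Ioo_neBot hr₀pos
  have hIooIcc : Ioo (0:ℝ) r₀ ⊆ Icc 0 R := fun x hx => ⟨hx.1.le, le_trans hx.2.le hr₀R⟩
  have tendΦ : Filter.Tendsto Φ (𝓝[Ioo (0:ℝ) r₀] 0) (𝓝 0) := by
    have h1 := (hΦcont 0 ⟨le_rfl, hr₀pos.le⟩).tendsto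
    have h2 : Φ 0 = 0 := by simp [hΦ]
    rw [h2] at h1
    exact h1.mono_left (nhdsWithin_mono 0 Ioo_subset_Icc_self)
  have tendL : Filter.Tendsto Lprim (𝓝[Ioo (0:ℝ) r₀] 0) (𝓝 0) := by
    have h1 := (hLprimcont 0 ⟨le_rfl, hR.le⟩).tendsto
    have h2 : Lprim 0 = 0 := by simp [hLprim]
    rw [h2] at h1
    exact h1.mono_left (nhdsWithin_mono 0 hIooIcc)
  have tendlogF : Filter.Tendsto (fun a => Real.log a * F a) (𝓝[Ioo (0:ℝ) r₀] 0) (𝓝 0) := by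
    apply squeeze_zero_norm' (a := fun a => Mh * a)
    · have h1 : Iio (1:ℝ) ∈ 𝓝[Ioo (0:ℝ) r₀] (0:ℝ) :=
        mem_nhdsWithin_of_mem_nhds (Iio_mem_nhds one_pos)
      filter_upwards [h1, self_mem_nhdsWithin] with a ha1 ha
      have ha0 : 0 < a := ha.1
      have har : a < r₀ := ha.2
      have heq2 : Real.log a * F a = ∫ ρ in (0:ℝ)..a, Real.log a * f ρ := by
        rw [intervalIntegral.integral_const_mul]
      rw [heq2]
      have hb2 := intervalIntegral.norm_integral_le_of_norm_le_const (C := Mh)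
        (f := fun ρ => Real.log a * f ρ) (a := 0) (b := a) ?_
      · calc ‖∫ ρ in (0:ℝ)..a, Real.log a * f ρ‖ ≤ Mh * |a - 0| := hb2
        _ = Mh * a := by rw [sub_zero, abs_of_pos ha0]
      · intro x hx
        rw [Set.uIoc_of_le ha0.le] at hx
        have hxR : x ∈ Icc (0:ℝ) R := ⟨hx.1.le, le_trans hx.2 (le_trans har.le hr₀R)⟩
        have hx1 : x ≤ 1 := le_trans hx.2 ha1.le
        have hloga : |Real.log a| ≤ |Real.log x| := by
          rw [abs_of_nonpos (Real.log_nonpos ha0.le ha1.le),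
            abs_of_nonpos (Real.log_nonpos hx.1.le hx1)]
          have := Real.log_le_log hx.1 hx.2
          linarith
        have hxlog : |Real.log x * x| ≤ 1 := (Real.abs_log_mul_self_lt x hx.1 hx1).le
        have hhx : 0 < h x := hhpos x hxR
        calc ‖Real.log a * f x‖ = |Real.log a| * (x * h x) := by
              rw [Real.norm_eq_abs, abs_mul, hf,
                abs_of_nonneg (mul_nonneg hx.1.le hhx.le)]
        _ ≤ |Real.log x| * (x * h x) :=
              mul_le_mul_of_nonneg_right hloga (mul_nonneg hx.1.le hhx.le)
        _ = |Real.log x * x| * h x := by rw [abs_mul, abs_of_nonneg hx.1.le]; ring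
        _ ≤ 1 * Mh := mul_le_mul hxlog (hMhb x hxR) hhx.le one_pos.le
        _ = Mh := one_mul Mh
    · have : Filter.Tendsto (fun a : ℝ => Mh * a) (𝓝 0) (𝓝 (Mh * 0)) :=
        (continuous_const.mul continuous_id).tendsto 0
      rw [mul_zero] at this
      exact this.mono_left nhdsWithin_le_nhds
  have tendG : Filter.Tendsto G (𝓝[Ioo (0:ℝ) r₀] 0) (𝓝 0) := by
    have := tendlogF.sub tendL
    rw [sub_zero] at this
    exact this
  have hΦG : Φ r₀ = G r₀ := by
    have hconst : Filter.Tendsto (fun a => Φ a - G a) (𝓝[Ioo (0:ℝ) r₀] 0)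
        (𝓝 (Φ r₀ - G r₀)) := by
      apply Filter.Tendsto.congr' _ tendsto_const_nhds
      filter_upwards [self_mem_nhdsWithin] with a ha
      exact key a ha
    have h2 := tendΦ.sub tendG
    rw [sub_zero] at h2
    have := tendsto_nhds_unique hconst h2
    linarith
  -- rewrite G r₀
  have hfiir := hfii r₀ ⟨hr₀pos.le, hr₀R⟩
  have hLiir := hLii r₀ ⟨hr₀pos.le, hr₀R⟩
  have hGr₀ : G r₀ = ∫ ρ in (0:ℝ)..r₀, (Real.log r₀ * f ρ - L ρ) := by
    rw [intervalIntegral.integral_sub (hfiir.const_mul _) hLiir,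
      intervalIntegral.integral_const_mul]
  -- Young bound integrand
  set w : ℝ → ℝ := fun ρ => r₀ * (Real.exp 1)⁻¹ + c₂ * (ρ + ρ * u ρ) with hw
  have hwcont : ContinuousOn w (Icc 0 r₀) := by
    apply ContinuousOn.add continuousOn_const
    exact continuousOn_const.mul (continuousOn_id.add
      (continuousOn_id.mul (hucont.mono hRIcc)))
  have hwii : IntervalIntegrable w volume 0 r₀ := by
    have h1 : ContinuousOn w (Set.uIcc 0 r₀) := by rwa [Set.uIcc_of_le hr₀pos.le]
    exact h1.intervalIntegrable
  have hmono : ∀ ρ ∈ Icc (0:ℝ) r₀, Real.log r₀ * f ρ - L ρ ≤ w ρ := by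
    intro ρ hρ
    rcases eq_or_lt_of_le hρ.1 with hρ0 | hρ0
    · simp only [hw, hf, hL, ← hρ0, mul_zero, zero_mul, sub_zero, mul_zero, add_zero, zero_add,
        sub_self]
      positivity
    · have hρR : ρ ∈ Icc (0:ℝ) R := hRIcc hρ
      have huρ := hupos ρ hρR
      have hB : 0 < h ρ := hhpos ρ hρR
      have hyoung := young_ineq (Real.log r₀ - Real.log ρ) (h ρ) hB
      have hexp : Real.exp (Real.log r₀ - Real.log ρ) = r₀ / ρ := by
        rw [Real.exp_sub, Real.exp_log hr₀pos, Real.exp_log hρ0]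
      rw [hexp] at hyoung
      have hbd := hHlog (u ρ) huρ.le
      have hmul := mul_le_mul_of_nonneg_left hyoung hρ0.le
      have hstep : ρ * (r₀ / ρ / Real.exp 1) = r₀ * (Real.exp 1)⁻¹ := by
        field_simp
      have hLHS : Real.log r₀ * f ρ - L ρ = ρ * ((Real.log r₀ - Real.log ρ) * h ρ) := by
        simp only [hf, hL]; ring
      rw [hLHS]
      calc ρ * ((Real.log r₀ - Real.log ρ) * h ρ)
          ≤ ρ * (r₀ / ρ / Real.exp 1 + h ρ * Real.log (h ρ)) := hmul
      _ = r₀ * (Real.exp 1)⁻¹ + ρ * (h ρ * Real.log (h ρ)) := by rw [mul_add, hstep]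
      _ ≤ r₀ * (Real.exp 1)⁻¹ + ρ * (c₂ * (1 + u ρ)) := by
            have := mul_le_mul_of_nonneg_left hbd hρ0.le
            linarith
      _ = w ρ := by simp only [hw]; ring
  have hint_le : G r₀ ≤ ∫ ρ in (0:ℝ)..r₀, w ρ := by
    rw [hGr₀]
    exact intervalIntegral.integral_mono_on hr₀pos.le ((hfiir.const_mul _).sub hLiir) hwii hmono
  -- compute ∫ w
  have huuii : IntervalIntegrable (fun ρ => ρ * u ρ) volume 0 R := by
    have h1 : ContinuousOn (fun ρ => ρ * u ρ) (Set.uIcc 0 R) := by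
      rw [Set.uIcc_of_le hR.le]; exact continuousOn_id.mul hucont
    exact h1.intervalIntegrable
  have huuiir : IntervalIntegrable (fun ρ => ρ * u ρ) volume 0 r₀ := by
    have h1 : ContinuousOn (fun ρ => ρ * u ρ) (Set.uIcc 0 r₀) := by
      rw [Set.uIcc_of_le hr₀pos.le]
      exact continuousOn_id.mul (hucont.mono hRIcc)
    exact h1.intervalIntegrable
  have hwval : ∫ ρ in (0:ℝ)..r₀, w ρ
      = r₀ * (r₀ * (Real.exp 1)⁻¹) + c₂ * (r₀ ^ 2 / 2 + ∫ ρ in (0:ℝ)..r₀, ρ * u ρ) := by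
    simp only [hw]
    rw [intervalIntegral.integral_add intervalIntegrable_const
      (((intervalIntegral.intervalIntegrable_id).add huuiir).const_mul c₂),
      intervalIntegral.integral_const,
      intervalIntegral.integral_const_mul,
      intervalIntegral.integral_add intervalIntegral.intervalIntegrable_id huuiir,
      integral_id]
    simp only [smul_eq_mul, sub_zero, zero_pow, ne_eq, OfNat.ofNat_ne_zero,
      not_false_eq_true, zero_div, sub_zero]
  -- mass bound
  have hIu : (∫ ρ in (0:ℝ)..r₀, ρ * u ρ) ≤ m / (2 * π) := by
    have hπ : (2:ℝ) * π ≠ 0 := by positivity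
    have h2 : (∫ ρ in (0:ℝ)..R, ρ * u ρ) = m / (2 * π) := by
      rw [eq_div_iff hπ]
      linarith [hmass]
    rw [← h2]
    apply intervalIntegral.integral_mono_interval le_rfl hr₀pos.le hr₀R _ huuii
    filter_upwards [ae_restrict_mem measurableSet_Ioc] with ρ hρ
    exact mul_nonneg hρ.1.le (hupos ρ ⟨hρ.1.le, hρ.2⟩).le
  -- final arithmetic
  have hπ1 : (1:ℝ) ≤ 2 * π := by nlinarith [Real.pi_gt_three]
  have hmd : m / (2 * π) ≤ m := div_le_self hm.le hπ1
  have hexp1 : (Real.exp 1)⁻¹ ≤ 1 := by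
    rw [inv_le_one_iff₀]
    right
    linarith [Real.add_one_le_exp 1, Real.exp_pos 1]
  have hΦle : Φ r₀ ≤ (1 + c₂) * (R ^ 2 + m) := by
    have h1 : Φ r₀ ≤ r₀ * (r₀ * (Real.exp 1)⁻¹) + c₂ * (r₀ ^ 2 / 2 + m / (2 * π)) := by
      rw [hΦG]
      calc G r₀ ≤ ∫ ρ in (0:ℝ)..r₀, w ρ := hint_le
      _ = r₀ * (r₀ * (Real.exp 1)⁻¹) + c₂ * (r₀ ^ 2 / 2 + ∫ ρ in (0:ℝ)..r₀, ρ * u ρ) := hwval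
      _ ≤ r₀ * (r₀ * (Real.exp 1)⁻¹) + c₂ * (r₀ ^ 2 / 2 + m / (2 * π)) := by
          have := mul_le_mul_of_nonneg_left (add_le_add_left hIu (r₀ ^ 2 / 2)) hc₂pos.le
          linarith
    have h2 : r₀ * (r₀ * (Real.exp 1)⁻¹) ≤ R ^ 2 := by nlinarith [Real.exp_pos 1]
    have h3 : c₂ * (r₀ ^ 2 / 2 + m / (2 * π)) ≤ c₂ * (R ^ 2 + m) := by
      apply mul_le_mul_of_nonneg_left _ hc₂pos.le
      nlinarith
    nlinarith
  -- rewrite goal and conclude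
  have hrwgoal : (∫ r in (0:ℝ)..r₀, r⁻¹ * ∫ ρ in (0:ℝ)..r, ρ * Hfun φ ψ (u ρ)) = Φ r₀ := by
    apply intervalIntegral.integral_congr
    intro r hr
    rw [Set.uIcc_of_le hr₀pos.le] at hr
    have hinner : (∫ ρ in (0:ℝ)..r, ρ * Hfun φ ψ (u ρ)) = F r := by
      apply intervalIntegral.integral_congr
      intro ρ hρ
      rw [Set.uIcc_of_le hr.1] at hρ
      have hρR : ρ ∈ Icc (0:ℝ) R := ⟨hρ.1, le_trans hρ.2 (le_trans hr.2 hr₀R)⟩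
      simp only [hf]
      rw [hHeq (u ρ) (hupos ρ hρR).le]
    simp only [hq]
    rw [hinner]
  rw [hrwgoal]
  have hE : (0:ℝ) < 8 * π * Real.exp (δ * R) := by positivity
  calc 8 * π * Real.exp (δ * R) * Φ r₀
      ≤ 8 * π * Real.exp (δ * R) * ((1 + c₂) * (R ^ 2 + m)) :=
        mul_le_mul_of_nonneg_left hΦle hE.le
  _ = 8 * π * Real.exp (δ * R) * (1 + c₂) * (R ^ 2 + m) := by ring
end
end
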